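/- Let η be a torsion-type tensor on (V,J) satisfying the almost Kähler condition, and suppose V = V₀ ⊕ V₁ ⊕ H is an orthogonal direct sum of J-invariant subspaces such that: H = {v ∈ V : η_v = 0}; T_v w ∈ V₀ for all v,w ∈ V₀; and η_v w = 0 for all v ∈ V₀, w ∈ V₁. Then every e ∈ V₀ that is orthogonal to η_v x for all v ∈ V₀ and x ∈ H satisfies η_e x = 0 for all x ∈ H. (This is equation (4.4) in the proof of Lemma 4.6: for the splitting V₀ = E₁ ⊕ E₂ with E₂ = η_{V₀}H, one has η_{E₁}H = 0.) -/
import Mathlib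


open scoped InnerProductSpace

/-- Equation (4.4) in the proof of Lemma 4.6. For an orthogonal
J-invariant splitting `V = V₀ ⊕ V₁ ⊕ H` with `H` the Kähler nullity,
`T(V₀,V₀) ⊆ V₀` and `η_{V₀} V₁ = 0`, any `e ∈ V₀` orthogonal to `η_{V₀} H`
satisfies `η_e H = 0`. -/
theorem eta_E1_H_eq_zero
    {V : Type*} [NormedAddCommGroup V] [InnerProductSpace ℝ V] [FiniteDimensional ℝ V]
    (J : V →ₗ[ℝ] V)
    (hJiso : ∀ x y : V, ⟪J x, J y⟫_ℝ = ⟪x, y⟫_ℝ)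
    (hJJ : ∀ x : V, J (J x) = -x)
    (η : V →ₗ[ℝ] V →ₗ[ℝ] V)
    (hskew : ∀ x y z : V, ⟪η x y, z⟫_ℝ = -⟪y, η x z⟫_ℝ)
    (hanti : ∀ x y : V, η x (J y) = -J (η x y))
    (T : V → V → V) (hT : ∀ x y : V, T x y = η x y - η y x)
    (hAK : ∀ x y z : V, ⟪T x y, z⟫_ℝ = -⟪η z x, y⟫_ℝ)
    (V₀ V₁ H : Submodule ℝ V)
    (horth01 : ∀ v ∈ V₀, ∀ w ∈ V₁, ⟪v, w⟫_ℝ = 0)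
    (horth0H : ∀ v ∈ V₀, ∀ x ∈ H, ⟪v, x⟫_ℝ = 0)
    (horth1H : ∀ v ∈ V₁, ∀ x ∈ H, ⟪v, x⟫_ℝ = 0)
    (hspan : V₀ ⊔ V₁ ⊔ H = ⊤)
    (hJ0 : ∀ v ∈ V₀, J v ∈ V₀)
    (hJ1 : ∀ v ∈ V₁, J v ∈ V₁)
    (hJH : ∀ x ∈ H, J x ∈ H)
    (hH : ∀ v : V, v ∈ H ↔ ∀ y : V, η v y = 0)
    (hTV0 : ∀ v ∈ V₀, ∀ w ∈ V₀, T v w ∈ V₀)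
    (hV0V1 : ∀ v ∈ V₀, ∀ w ∈ V₁, η v w = 0) :
    ∀ e ∈ V₀, (∀ v ∈ V₀, ∀ x ∈ H, ⟪e, η v x⟫_ℝ = 0) →
      ∀ x ∈ H, η e x = 0 := by
  intro e he heorth x hx
  -- key: for every z, ⟪η e x, z⟫ = -⟪η z e, x⟫
  have hkey : ∀ z : V, ⟪η e x, z⟫_ℝ = -⟪η z e, x⟫_ℝ := by
    intro z
    have hx0 : η x e = 0 := (hH x).mp hx e
    have := hAK e x z
    rw [hT, hx0, sub_zero] at this
    rw [this, real_inner_comm]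
  have hall : ∀ z : V, ⟪η e x, z⟫_ℝ = 0 := by
    intro z
    have hz : z ∈ V₀ ⊔ V₁ ⊔ H := hspan ▸ Submodule.mem_top
    rcases Submodule.mem_sup.mp hz with ⟨a, ha, b, hb, rfl⟩
    rcases Submodule.mem_sup.mp ha with ⟨a₀, ha₀, a₁, ha₁, rfl⟩
    have h0 : ⟪η e x, a₀⟫_ℝ = 0 := by
      rw [hkey, hskew, neg_neg]; exact heorth a₀ ha₀ x hx
    have h1 : ⟪η e x, a₁⟫_ℝ = 0 := by
      rw [hkey]
      have hTe := hAK a₁ e x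
      rw [(hH x).mp hx a₁, hT, hV0V1 e he a₁ ha₁, sub_zero] at hTe
      rw [hTe]
      simp
    have hH' : ⟪η e x, b⟫_ℝ = 0 := by
      rw [hkey, (hH b).mp hb e]
      simp
    rw [inner_add_right, inner_add_right, h0, h1, hH']
    ring
  have := hall (η e x)
  exact inner_self_eq_zero.mp this
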